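/- Let P_{ŨX̃ỸZ̃} satisfy ℙ(Z̃ = X̃) = 1 (equivalently H(X̃|Ũ,Ỹ,Z̃) = 0 suffices). Then D(P_{X̃Ỹ}‖P_{XY}) + I(Ũ ∧ Ỹ|X̃) + I(Z̃ ∧ X̃|Ũ,Ỹ) + max{ I(Ũ ∧ X̃) − I(Ũ ∧ Ỹ) − R, 0 } ≥ D(P_{X̃Ỹ}‖P_{XY}) + max{ H(X̃|Ỹ) − R, 0 }. -/

import Mathlib

open Real Finset
open scoped Classical

noncomputable section

/-- Shannon entropy (base 2) of a pmf on a finite type. -/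
def ent {S : Type*} [Fintype S] (p : S → ℝ) : ℝ :=
  - ∑ s, p s * Real.logb 2 (p s)

/-- Pushforward pmf under a map. -/
def push {S T : Type*} [Fintype S] [Fintype T] (p : S → ℝ) (f : S → T) : T → ℝ :=
  fun t => ∑ s, if f s = t then p s else 0

/-- Entropy of the random variable `f` under joint pmf `p`. -/
def entOf {S T : Type*} [Fintype S] [Fintype T] (p : S → ℝ) (f : S → T) : ℝ :=
  ent (push p f)

/-- Conditional entropy `H(f | g)` under joint pmf `p`. -/
def condEnt {S T V : Type*} [Fintype S] [Fintype T] [Fintype V]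
    (p : S → ℝ) (f : S → T) (g : S → V) : ℝ :=
  entOf p (fun s => (f s, g s)) - entOf p g

/-- Mutual information `I(f ∧ g)` under joint pmf `p`. -/
def miOf {S T V : Type*} [Fintype S] [Fintype T] [Fintype V]
    (p : S → ℝ) (f : S → T) (g : S → V) : ℝ :=
  entOf p f + entOf p g - entOf p (fun s => (f s, g s))

/-- Conditional mutual information `I(f ∧ g | h)` under joint pmf `p`. -/
def cmiOf {S T V W : Type*} [Fintype S] [Fintype T] [Fintype V] [Fintype W]
    (p : S → ℝ) (f : S → T) (g : S → V) (h : S → W) : ℝ :=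
  condEnt p f h + condEnt p g h - condEnt p (fun s => (f s, g s)) h

/-- Kullback–Leibler divergence (base 2). -/
def kl {S : Type*} [Fintype S] (p q : S → ℝ) : ℝ :=
  ∑ s, p s * Real.logb 2 (p s / q s)

end

section helpers

variable {S T V W : Type*} [Fintype S] [Fintype T] [Fintype V] [Fintype W]

lemma push_nonneg (p : S → ℝ) (hp : ∀ s, 0 ≤ p s) (f : S → T) (t : T) :
    0 ≤ push p f t := by
  apply Finset.sum_nonneg
  intro s _
  split
  · exact hp s
  · exact le_rfl

lemma push_apply_ge (p : S → ℝ) (hp : ∀ s, 0 ≤ p s) (f : S → T) (s : S) :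
    p s ≤ push p f (f s) := by
  have h0 : ∀ i ∈ Finset.univ, (0:ℝ) ≤ if f i = f s then p i else 0 := by
    intro i _
    split
    · exact hp i
    · exact le_rfl
  have := Finset.single_le_sum h0 (Finset.mem_univ s)
  simpa [push] using this

lemma sum_push_mul (p : S → ℝ) (f : S → T) (F : T → ℝ) :
    ∑ t, push p f t * F t = ∑ s, p s * F (f s) := by
  unfold push
  simp only [Finset.sum_mul, ite_mul, zero_mul]
  rw [Finset.sum_comm]
  congr 1
  ext s
  simpa using Finset.sum_ite_eq Finset.univ (f s) (fun t => p s * F t)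

lemma sum_push (p : S → ℝ) (f : S → T) : ∑ t, push p f t = ∑ s, p s := by
  have := sum_push_mul p f (fun _ => 1)
  simpa using this

lemma entOf_eq (p : S → ℝ) (f : S → T) :
    entOf p f = -∑ s, p s * Real.logb 2 (push p f (f s)) := by
  unfold entOf ent
  rw [sum_push_mul p f (fun t => Real.logb 2 (push p f t))]

lemma entOf_congr (p : S → ℝ) (f : S → T) (g : S → V)
    (hfg : ∀ s s', f s = f s' ↔ g s = g s') : entOf p f = entOf p g := by
  rw [entOf_eq, entOf_eq]
  congr 1
  apply Finset.sum_congr rfl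
  intro s _
  have : push p f (f s) = push p g (g s) := by
    unfold push
    apply Finset.sum_congr rfl
    intro s' _
    simp only [hfg s' s]
  rw [this]

lemma push_marg (p : S → ℝ) (f : S → T) (h : S → W) (c : W) :
    ∑ a, push p (fun s => (f s, h s)) (a, c) = push p h c := by
  unfold push
  rw [Finset.sum_comm]
  apply Finset.sum_congr rfl
  intro s _
  simp only [Prod.mk.injEq, ite_and]
  simpa using Finset.sum_ite_eq Finset.univ (f s) (fun _ => if h s = c then p s else 0)

end helpers

section nonneg

variable {S T V W : Type*} [Fintype S] [Fintype T] [Fintype V] [Fintype W]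

lemma cmiOf_nonneg (p : S → ℝ) (hp : ∀ s, 0 ≤ p s) (hp1 : ∑ s, p s = 1)
    (f : S → T) (g : S → V) (h : S → W) : 0 ≤ cmiOf p f g h := by
  classical
  set pfh := push p (fun s => (f s, h s)) with hpfh
  set pgh := push p (fun s => (g s, h s)) with hpgh
  set pq := push p (fun s => ((f s, g s), h s)) with hpq
  set ph := push p h with hph
  have hrep : cmiOf p f g h =
      ∑ s, p s * (Real.logb 2 (pq ((f s, g s), h s)) + Real.logb 2 (ph (h s))
        - Real.logb 2 (pfh (f s, h s)) - Real.logb 2 (pgh (g s, h s))) := by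
    have e1 := entOf_eq p (fun s => (f s, h s))
    have e2 := entOf_eq p (fun s => (g s, h s))
    have e3 := entOf_eq p (fun s => ((f s, g s), h s))
    have e4 := entOf_eq p h
    simp only [cmiOf, condEnt, e1, e2, e3, e4, ← hpfh, ← hpgh, ← hpq, ← hph]
    simp only [mul_add, mul_sub]
    rw [Finset.sum_sub_distrib, Finset.sum_sub_distrib, Finset.sum_add_distrib]
    ring
  set L2 : ℝ := Real.log 2 with hL2
  have hL2pos : 0 < L2 := Real.log_pos (by norm_num)
  set r : S → ℝ := fun s =>
    pfh (f s, h s) * pgh (g s, h s) / (pq ((f s, g s), h s) * ph (h s)) with hr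
  -- termwise lower bound
  have hterm : ∀ s, p s * (1 - r s) / L2 ≤
      p s * (Real.logb 2 (pq ((f s, g s), h s)) + Real.logb 2 (ph (h s))
        - Real.logb 2 (pfh (f s, h s)) - Real.logb 2 (pgh (g s, h s))) := by
    intro s
    rcases eq_or_lt_of_le (hp s) with hps | hps
    · rw [← hps]; simp
    · have h1 : 0 < pq ((f s, g s), h s) :=
        lt_of_lt_of_le hps (push_apply_ge p hp _ s)
      have h2 : 0 < ph (h s) := lt_of_lt_of_le hps (push_apply_ge p hp h s)
      have h3 : 0 < pfh (f s, h s) := lt_of_lt_of_le hps (push_apply_ge p hp _ s)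
      have h4 : 0 < pgh (g s, h s) := lt_of_lt_of_le hps (push_apply_ge p hp _ s)
      have hrpos : 0 < r s := by
        rw [hr]; positivity
      have hlog : Real.log (r s) ≤ r s - 1 := Real.log_le_sub_one_of_pos hrpos
      have hlogb : Real.logb 2 (pq ((f s, g s), h s)) + Real.logb 2 (ph (h s))
          - Real.logb 2 (pfh (f s, h s)) - Real.logb 2 (pgh (g s, h s))
          = - Real.log (r s) / L2 := by
        rw [hr]
        simp only [Real.logb]
        rw [Real.log_div (by positivity) (by positivity),
          Real.log_mul (ne_of_gt h3) (ne_of_gt h4),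
          Real.log_mul (ne_of_gt h1) (ne_of_gt h2)]
        ring
      rw [hlogb, ← mul_div_assoc, div_le_div_iff_of_pos_right hL2pos]
      exact mul_le_mul_of_nonneg_left (by linarith) (hp s)
  -- sum bound
  set F : (T × V) × W → ℝ := fun v =>
    pfh (v.1.1, v.2) * pgh (v.1.2, v.2) / (pq v * ph v.2) with hF
  set G : (T × V) × W → ℝ := fun v =>
    pfh (v.1.1, v.2) * pgh (v.1.2, v.2) / ph v.2 with hG
  have hTpush : ∑ s, p s * r s = ∑ v, pq v * F v :=
    (sum_push_mul p (fun s => ((f s, g s), h s)) F).symm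
  have hFG : ∀ v, pq v * F v ≤ G v := by
    rintro ⟨⟨a, b⟩, c⟩
    by_cases hq : pq ((a, b), c) = 0
    · rw [hq, zero_mul]
      apply div_nonneg
      · exact mul_nonneg (push_nonneg p hp _ _) (push_nonneg p hp _ _)
      · exact push_nonneg p hp _ _
    · simp only [hF, hG]
      rw [← mul_div_assoc, mul_div_mul_left _ _ hq]
  have hGsum : ∑ v, G v ≤ 1 := by
    have hinner : ∀ c, ∑ a, ∑ b, pfh (a, c) * pgh (b, c) / ph c ≤ ph c := by
      intro c
      have e : ∑ a, ∑ b, pfh (a, c) * pgh (b, c) / ph c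
          = (∑ a, pfh (a, c)) * (∑ b, pgh (b, c)) / ph c := by
        rw [Finset.sum_mul, Finset.sum_div]
        apply Finset.sum_congr rfl
        intro a _
        rw [Finset.mul_sum, Finset.sum_div]
      rw [e, push_marg p f h c, push_marg p g h c]
      by_cases hc : ph c = 0
      · rw [hc]; simp
      · rw [mul_div_assoc, div_self hc, mul_one]
    have e2 : ∑ v : (T × V) × W, G v = ∑ c, ∑ a, ∑ b, pfh (a, c) * pgh (b, c) / ph c := by
      rw [Fintype.sum_prod_type, Finset.sum_comm]
      apply Finset.sum_congr rfl
      intro c _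
      rw [Fintype.sum_prod_type]
    rw [e2]
    calc ∑ c, ∑ a, ∑ b, pfh (a, c) * pgh (b, c) / ph c ≤ ∑ c, ph c :=
          Finset.sum_le_sum (fun c _ => hinner c)
      _ = 1 := by rw [hph, sum_push, hp1]
  have hT : ∑ s, p s * r s ≤ 1 := by
    rw [hTpush]
    exact le_trans (Finset.sum_le_sum (fun v _ => hFG v)) hGsum
  have hfinal : (1 - ∑ s, p s * r s) / L2 ≤ cmiOf p f g h := by
    rw [hrep]
    calc (1 - ∑ s, p s * r s) / L2 = ∑ s, p s * (1 - r s) / L2 := by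
          rw [← Finset.sum_div]
          congr 1
          simp only [mul_sub, mul_one]
          rw [Finset.sum_sub_distrib, hp1]
      _ ≤ _ := Finset.sum_le_sum (fun s _ => hterm s)
  have : 0 ≤ (1 - ∑ s, p s * r s) / L2 :=
    div_nonneg (by linarith) (le_of_lt hL2pos)
  linarith

end nonneg

theorem stmt5 {U X Y Z : Type*} [Fintype U] [Fintype X] [Fintype Y] [Fintype Z]
    (p : U × X × Y × Z → ℝ) (PXY : X × Y → ℝ) (R : ℝ) (hR : 0 ≤ R)
    (hp : ∀ s, 0 ≤ p s) (hp1 : ∑ s, p s = 1)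
    (hP : ∀ a, 0 ≤ PXY a) (hP1 : ∑ a, PXY a = 1)
    (hac : ∀ a, PXY a = 0 → push p (fun s => (s.2.1, s.2.2.1)) a = 0)
    (hdet : condEnt p (fun s => s.2.1) (fun s => (s.1, s.2.2.1, s.2.2.2)) = 0) :
    kl (push p (fun s => (s.2.1, s.2.2.1))) PXY
        + cmiOf p (fun s => s.1) (fun s => s.2.2.1) (fun s => s.2.1)
        + cmiOf p (fun s => s.2.2.2) (fun s => s.2.1) (fun s => (s.1, s.2.2.1))
        + max (miOf p (fun s => s.1) (fun s => s.2.1)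
            - miOf p (fun s => s.1) (fun s => s.2.2.1) - R) 0
      ≥ kl (push p (fun s => (s.2.1, s.2.2.1))) PXY
        + max (condEnt p (fun s => s.2.1) (fun s => s.2.2.1) - R) 0 := by
  classical
  have E1 : entOf p (fun s : U × X × Y × Z => (s.2.2.1, s.2.1))
      = entOf p (fun s : U × X × Y × Z => (s.2.1, s.2.2.1)) := by
    apply entOf_congr
    intro s s'
    simp only [Prod.ext_iff]
    tauto
  have E2 : entOf p (fun s : U × X × Y × Z => ((s.1, s.2.2.1), s.2.1))
      = entOf p (fun s : U × X × Y × Z => (s.2.1, (s.1, s.2.2.1))) := by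
    apply entOf_congr
    intro s s'
    simp only [Prod.ext_iff]
    tauto
  have E3 : entOf p (fun s : U × X × Y × Z => ((s.2.2.2, s.2.1), (s.1, s.2.2.1)))
      = entOf p (fun s : U × X × Y × Z => (s.2.1, (s.1, s.2.2.1, s.2.2.2))) := by
    apply entOf_congr
    intro s s'
    simp only [Prod.ext_iff]
    tauto
  have E4 : entOf p (fun s : U × X × Y × Z => (s.2.2.2, (s.1, s.2.2.1)))
      = entOf p (fun s : U × X × Y × Z => (s.1, s.2.2.1, s.2.2.2)) := by
    apply entOf_congr
    intro s s'
    simp only [Prod.ext_iff]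
    tauto
  have E5 : entOf p (fun s : U × X × Y × Z => (s.2.1, (s.1, s.2.2.1, s.2.2.2)))
      = entOf p (fun s : U × X × Y × Z => (s.1, s.2.2.1, s.2.2.2)) := by
    have := hdet
    simp only [condEnt] at this
    linarith
  have hid : cmiOf p (fun s : U × X × Y × Z => s.1) (fun s => s.2.2.1) (fun s => s.2.1)
      + cmiOf p (fun s : U × X × Y × Z => s.2.2.2) (fun s => s.2.1) (fun s => (s.1, s.2.2.1))
      + (miOf p (fun s : U × X × Y × Z => s.1) (fun s => s.2.1)
        - miOf p (fun s : U × X × Y × Z => s.1) (fun s => s.2.2.1))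
      = condEnt p (fun s : U × X × Y × Z => s.2.1) (fun s => s.2.2.1) := by
    simp only [cmiOf, condEnt, miOf]
    linarith [E1, E2, E3, E4, E5]
  have h1 : 0 ≤ cmiOf p (fun s : U × X × Y × Z => s.1) (fun s => s.2.2.1) (fun s => s.2.1) :=
    cmiOf_nonneg p hp hp1 _ _ _
  have h2 : 0 ≤ cmiOf p (fun s : U × X × Y × Z => s.2.2.2) (fun s => s.2.1)
      (fun s => (s.1, s.2.2.1)) := cmiOf_nonneg p hp hp1 _ _ _
  rw [ge_iff_le]
  have hmaxle : max (condEnt p (fun s : U × X × Y × Z => s.2.1) (fun s => s.2.2.1) - R) 0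
      ≤ cmiOf p (fun s : U × X × Y × Z => s.1) (fun s => s.2.2.1) (fun s => s.2.1)
      + cmiOf p (fun s : U × X × Y × Z => s.2.2.2) (fun s => s.2.1) (fun s => (s.1, s.2.2.1))
      + max (miOf p (fun s : U × X × Y × Z => s.1) (fun s => s.2.1)
          - miOf p (fun s : U × X × Y × Z => s.1) (fun s => s.2.2.1) - R) 0 := by
    apply max_le
    · have hle := le_max_left (miOf p (fun s : U × X × Y × Z => s.1) (fun s => s.2.1)
          - miOf p (fun s : U × X × Y × Z => s.1) (fun s => s.2.2.1) - R) 0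
      linarith
    · have hle := le_max_right (miOf p (fun s : U × X × Y × Z => s.1) (fun s => s.2.1)
          - miOf p (fun s : U × X × Y × Z => s.1) (fun s => s.2.2.1) - R) 0
      linarith
  linarith
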